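/- If a nonnegative matrix W is irreducible (its associated directed graph is strongly connected) and row-stochastic, then 1 is a simple eigenvalue of W (the dominant eigenvalue is unique). -/

import Mathlib

open Polynomial Matrix Module

/-- Shifting a matrix by the identity composes the charpoly with `X + C 1`. -/
lemma charpoly_sub_one_aux {n : ℕ} (M : Matrix (Fin n) (Fin n) ℂ) :
    (M - 1).charpoly = (M.charpoly).comp (X + C 1) := by
  classical
  let f : ℂ[X] →+* ℂ[X] := eval₂RingHom Polynomial.C (X + C 1)
  have hmap : (charmatrix M).map f = charmatrix (M - 1) := by
    refine Matrix.ext fun i j => ?_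
    by_cases h : i = j
    · subst h
      rw [Matrix.map_apply, charmatrix_apply_eq, charmatrix_apply_eq, Matrix.sub_apply,
        Matrix.one_apply_eq]
      simp only [f, coe_eval₂RingHom, eval₂_sub, eval₂_X, eval₂_C, map_sub]
      ring
    · rw [Matrix.map_apply, charmatrix_apply_ne _ _ _ h, charmatrix_apply_ne _ _ _ h,
        Matrix.sub_apply, Matrix.one_apply_ne h, sub_zero]
      simp only [f, coe_eval₂RingHom, eval₂_neg, eval₂_C]
  have hdet := RingHom.map_det f (charmatrix M)
  rw [RingHom.mapMatrix_apply] at hdet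
  rw [Matrix.charpoly, ← hmap, ← hdet]
  rfl

theorem stmt_17 (n : ℕ) (hn : 0 < n) (W : Matrix (Fin n) (Fin n) ℝ)
    (hnonneg : ∀ i j, 0 ≤ W i j)
    (hrow : ∀ i, ∑ j, W i j = 1)
    (hirr : ∀ i j : Fin n, ∃ m : ℕ, 1 ≤ m ∧ 0 < (W ^ m) i j) :
    Polynomial.rootMultiplicity 1 (Matrix.charpoly (W.map (Complex.ofReal ·))) = 1 := by
  classical
  set M : Matrix (Fin n) (Fin n) ℂ := W.map (Complex.ofReal ·) with hMdef
  -- powers of W are nonnegative with row sums 1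
  have hpow_nonneg : ∀ m : ℕ, ∀ i j, 0 ≤ (W ^ m) i j := by
    intro m
    induction m with
    | zero => intro i j; by_cases h : i = j <;> simp [pow_zero, Matrix.one_apply, h]
    | succ m ih =>
      intro i j
      rw [pow_succ, Matrix.mul_apply]
      exact Finset.sum_nonneg fun k _ => mul_nonneg (ih i k) (hnonneg k j)
  have hpow_row : ∀ m : ℕ, ∀ i, ∑ j, (W ^ m) i j = 1 := by
    intro m
    induction m with
    | zero => intro i; simp [pow_zero, Matrix.one_apply]
    | succ m ih =>
      intro i
      simp only [pow_succ, Matrix.mul_apply]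
      rw [Finset.sum_comm]
      calc ∑ k, ∑ j, (W ^ m) i k * W k j
          = ∑ k, (W ^ m) i k * ∑ j, W k j := by
            refine Finset.sum_congr rfl fun k _ => ?_
            rw [Finset.mul_sum]
        _ = 1 := by simp only [hrow, mul_one]; exact ih i
  -- a real fixed vector of W is constant
  have hconst : ∀ x : Fin n → ℝ, W.mulVec x = x → ∀ i j, x i = x j := by
    intro x hx
    have hxm : ∀ m : ℕ, (W ^ m).mulVec x = x := by
      intro m
      induction m with
      | zero => simp [pow_zero]
      | succ m ih => rw [pow_succ, ← Matrix.mulVec_mulVec, hx, ih]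
    obtain ⟨i0, -, hi0⟩ := Finset.exists_max_image Finset.univ x ⟨⟨0, hn⟩, Finset.mem_univ _⟩
    have key : ∀ j, x j = x i0 := by
      intro j
      obtain ⟨m, -, hmpos⟩ := hirr i0 j
      have h1 : ∑ k, (W ^ m) i0 k * x k = x i0 := by
        have := congrFun (hxm m) i0
        simpa [Matrix.mulVec, dotProduct] using this
      have h2 : ∑ k, (W ^ m) i0 k * (x i0 - x k) = 0 := by
        simp only [mul_sub, Finset.sum_sub_distrib, h1, ← Finset.sum_mul, hpow_row m i0,
          one_mul, sub_self]
      have h3 : ∀ k ∈ Finset.univ, 0 ≤ (W ^ m) i0 k * (x i0 - x k) := fun k _ =>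
        mul_nonneg (hpow_nonneg m i0 k) (sub_nonneg.2 (hi0 k (Finset.mem_univ k)))
      have h4 := (Finset.sum_eq_zero_iff_of_nonneg h3).1 h2 j (Finset.mem_univ j)
      have h5 : x i0 - x j = 0 := by
        rcases mul_eq_zero.1 h4 with h | h
        · exact absurd h (ne_of_gt hmpos)
        · exact h
      linarith
    intro i j; rw [key i, key j]
  -- entrywise real/imag description of M.mulVec
  have hre : ∀ (v : Fin n → ℂ) (i), (M.mulVec v i).re = ∑ j, W i j * (v j).re := by
    intro v i
    simp only [Matrix.mulVec, dotProduct, hMdef, Matrix.map_apply, Complex.re_sum,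
      Complex.re_ofReal_mul]
  have him : ∀ (v : Fin n → ℂ) (i), (M.mulVec v i).im = ∑ j, W i j * (v j).im := by
    intro v i
    simp only [Matrix.mulVec, dotProduct, hMdef, Matrix.map_apply, Complex.im_sum,
      Complex.im_ofReal_mul]
  -- complex fixed vectors of M are constant
  have hCconst : ∀ v : Fin n → ℂ, M.mulVec v = v → ∀ i j, v i = v j := by
    intro v hv i j
    have hx : W.mulVec (fun i => (v i).re) = fun i => (v i).re := by
      funext i
      have := congrArg Complex.re (congrFun hv i)
      rw [hre v i] at this
      simpa [Matrix.mulVec, dotProduct] using this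
    have hy : W.mulVec (fun i => (v i).im) = fun i => (v i).im := by
      funext i
      have := congrArg Complex.im (congrFun hv i)
      rw [him v i] at this
      simpa [Matrix.mulVec, dotProduct] using this
    exact Complex.ext (hconst _ hx i j) (hconst _ hy i j)
  set A : Matrix (Fin n) (Fin n) ℂ := M - 1 with hAdef
  have hA_apply : ∀ v : Fin n → ℂ, A.mulVec v = M.mulVec v - v := by
    intro v; rw [hAdef, Matrix.sub_mulVec, Matrix.one_mulVec]
  -- real averaged bound: fixed plus constant shift forces the shift to vanish
  have hshift : ∀ (x : Fin n → ℝ) (a : ℝ), (∀ i, W.mulVec x i = x i + a) → a = 0 := by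
    intro x a hx
    obtain ⟨imax, -, himax⟩ := Finset.exists_max_image Finset.univ x ⟨⟨0, hn⟩, Finset.mem_univ _⟩
    obtain ⟨imin, -, himin⟩ := Finset.exists_min_image Finset.univ x ⟨⟨0, hn⟩, Finset.mem_univ _⟩
    have hub : x imax + a ≤ x imax := by
      rw [← hx imax]
      calc W.mulVec x imax = ∑ j, W imax j * x j := by
            simp [Matrix.mulVec, dotProduct]
        _ ≤ ∑ j, W imax j * x imax := by
            refine Finset.sum_le_sum fun j _ => ?_
            exact mul_le_mul_of_nonneg_left (himax j (Finset.mem_univ j)) (hnonneg imax j)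
        _ = x imax := by rw [← Finset.sum_mul, hrow, one_mul]
    have hlb : x imin ≤ x imin + a := by
      rw [← hx imin]
      calc x imin = ∑ j, W imin j * x imin := by rw [← Finset.sum_mul, hrow, one_mul]
        _ ≤ ∑ j, W imin j * x j := by
            refine Finset.sum_le_sum fun j _ => ?_
            exact mul_le_mul_of_nonneg_left (himin j (Finset.mem_univ j)) (hnonneg imin j)
        _ = W.mulVec x imin := by simp [Matrix.mulVec, dotProduct]
    linarith
  -- kernel of A² is the kernel of A
  have hker2 : ∀ v : Fin n → ℂ, A.mulVec (A.mulVec v) = 0 → A.mulVec v = 0 := by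
    intro v hv
    set w : Fin n → ℂ := A.mulVec v with hwdef
    have hwfix : M.mulVec w = w := sub_eq_zero.mp (by rw [← hA_apply]; exact hv)
    set c : ℂ := w ⟨0, hn⟩ with hcdef
    have hwc : ∀ i, w i = c := fun i => hCconst w hwfix i ⟨0, hn⟩
    have hMv : ∀ i, M.mulVec v i = v i + c := by
      intro i
      have := congrFun (hA_apply v) i
      rw [← hwdef] at this
      have : w i = M.mulVec v i - v i := by rw [this]; rfl
      rw [hwc i] at this
      linear_combination -this
    have hcre : c.re = 0 := by
      refine hshift (fun i => (v i).re) c.re fun i => ?_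
      have h1 := congrArg Complex.re (hMv i)
      rw [hre v i] at h1
      simpa [Matrix.mulVec, dotProduct] using h1
    have hcim : c.im = 0 := by
      refine hshift (fun i => (v i).im) c.im fun i => ?_
      have h1 := congrArg Complex.im (hMv i)
      rw [him v i] at h1
      simpa [Matrix.mulVec, dotProduct] using h1
    have hc0 : c = 0 := Complex.ext hcre hcim
    funext i
    show w i = (0 : Fin n → ℂ) i
    rw [hwc i, hc0]
    rfl
  -- set up the endomorphism
  set b : Basis (Fin n) ℂ (Fin n → ℂ) := Pi.basisFun ℂ (Fin n) with hbdef
  set φ : Module.End ℂ (Fin n → ℂ) := Matrix.toLin b b A with hφdef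
  have hφ : ∀ v, φ v = A.mulVec v := by
    intro v
    rw [hφdef, hbdef, Matrix.toLin_eq_toLin', Matrix.toLin'_apply]
  have hpowker : ∀ (k : ℕ) (v : Fin n → ℂ), (φ ^ k) v = 0 → φ v = 0 := by
    intro k
    induction k with
    | zero =>
      intro v hv
      rw [pow_zero, Module.End.one_apply] at hv
      rw [hv, map_zero]
    | succ k ih =>
      intro v hv
      rw [pow_succ, Module.End.mul_apply] at hv
      have h2 : φ (φ v) = 0 := ih (φ v) hv
      rw [hφ, hφ] at h2
      rw [hφ]
      exact hker2 v h2
  have heq : φ.maxGenEigenspace 0 = LinearMap.ker φ := by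
    ext v
    rw [Module.End.mem_maxGenEigenspace]
    simp only [zero_smul, sub_zero, LinearMap.mem_ker]
    constructor
    · rintro ⟨k, hk⟩
      exact hpowker k v hk
    · intro h
      exact ⟨1, by rwa [pow_one]⟩
  -- the kernel of φ is the span of the all-ones vector
  set ones : Fin n → ℂ := fun _ => 1 with honesdef
  have hones_ne : ones ≠ 0 := by
    intro h
    have := congrFun h ⟨0, hn⟩
    simp [honesdef] at this
  have hMones : M.mulVec ones = ones := by
    funext i
    simp only [Matrix.mulVec, dotProduct, honesdef, mul_one, hMdef, Matrix.map_apply]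
    rw [← Complex.ofReal_sum]
    rw [hrow i]
    simp
  have hker_eq : LinearMap.ker φ = Submodule.span ℂ {ones} := by
    ext v
    rw [LinearMap.mem_ker, Submodule.mem_span_singleton]
    constructor
    · intro hv
      rw [hφ] at hv
      have hfix : M.mulVec v = v := sub_eq_zero.mp (by rw [← hA_apply]; exact hv)
      refine ⟨v ⟨0, hn⟩, funext fun i => ?_⟩
      have := hCconst v hfix i ⟨0, hn⟩
      simp [honesdef, this]
    · rintro ⟨a, rfl⟩
      rw [hφ, Matrix.mulVec_smul, hA_apply, hMones, sub_self, smul_zero]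
  -- conclusion
  calc Polynomial.rootMultiplicity 1 M.charpoly
      = ((M.charpoly).comp (X + C 1)).natTrailingDegree :=
        Polynomial.rootMultiplicity_eq_natTrailingDegree
    _ = (A.charpoly).natTrailingDegree := by rw [← charpoly_sub_one_aux, ← hAdef]
    _ = (φ.charpoly).natTrailingDegree := by
        rw [← LinearMap.charpoly_toMatrix φ b, hφdef, LinearMap.toMatrix_toLin]
    _ = Module.finrank ℂ (φ.maxGenEigenspace 0) := (LinearMap.finrank_maxGenEigenspace_zero_eq φ).symm
    _ = 1 := by rw [heq, hker_eq, finrank_span_singleton hones_ne]
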